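/- arXiv:1206.2329 — 3 statements merged into one kernel-verified Lean document; each statement's English description precedes it below -/
import Mathlib

section
/- Comparison Lemma: Let β > 1, let s ≤ t be real numbers, let q > 0, and let h ∈ L¹([s,t]) be nonnegative. Let v : [s,t] → [0,∞) be absolutely continuous with v(s) ≤ q and v'(r) ≤ −h(r)·v(r)^β for almost every r ∈ [s,t] (i.e. v is a subsolution of y' = −h·y^β, y(s) = q). Then v(r) ≤ ( q^{−(β−1)} + (β−1)·∫_s^r h(τ)dτ )^{−1/(β−1)} for all r ∈ [s,t]. -/
open MeasureTheory Set Filter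

/-- Monotone FTC inequality: if `w` is monotone on `[a,b]` and has a.e. on `(a,b)` a
derivative bounded below by an integrable nonnegative `φ`, then `∫_a^b φ ≤ w b - w a`. -/
lemma mono_ftc_le {a b : ℝ} (hab : a ≤ b) {w φ : ℝ → ℝ}
    (hw : MonotoneOn w (Icc a b))
    (hφ_int : IntegrableOn φ (Ioc a b))
    (hφ0 : ∀ x ∈ Ioc a b, 0 ≤ φ x)
    (hd : ∀ᵐ x ∂(volume.restrict (Ioo a b)), ∃ d, HasDerivAt w d x ∧ φ x ≤ d) :
    ∫ x in Ioc a b, φ x ≤ w b - w a := by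
  rcases eq_or_lt_of_le hab with rfl | hab'
  · simp
  -- the clamped extension of `w`
  set W : ℝ → ℝ := fun x => w (max a (min x b)) with hWdef
  have hclamp : ∀ x : ℝ, max a (min x b) ∈ Icc a b := fun x =>
    ⟨le_max_left _ _, max_le hab (min_le_right _ _)⟩
  have hWmono : Monotone W := fun x y hxy =>
    hw (hclamp x) (hclamp y) (max_le_max le_rfl (min_le_min hxy le_rfl))
  have hWa : ∀ x, w a ≤ W x := fun x => hw ⟨le_rfl, hab⟩ (hclamp x) (hclamp x).1
  have hWb : ∀ x, W x ≤ w b := fun x => hw (hclamp x) ⟨hab, le_rfl⟩ (hclamp x).2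
  have hWeq_ge : ∀ x, b ≤ x → W x = w b := by
    intro x hx
    simp only [hWdef]
    rw [min_eq_right hx, max_eq_right hab]
  have hWeq_on : ∀ x ∈ Icc a b, W x = w x := by
    intro x hx
    simp only [hWdef]
    rw [min_eq_left hx.2, max_eq_right hx.1]
  have hWmeas : Measurable W := hWmono.measurable
  have hWint : ∀ u v : ℝ, IntervalIntegrable W volume u v := fun u v =>
    (hWmono.monotoneOn _).intervalIntegrable
  -- key estimate for difference quotients
  have key : ∀ c : ℝ, 0 < c → ∫ x in a..b, (W (x + c) - W x) ≤ c * (w b - w a) := by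
    intro c hc
    have hshift : IntervalIntegrable (fun x => W (x + c)) volume a b := by
      have := (hWint (a + c) (b + c)).comp_add_right c
      simpa using this
    rw [intervalIntegral.integral_sub hshift (hWint a b)]
    rw [intervalIntegral.integral_comp_add_right W c]
    have hadd1 : (∫ x in a..(a+c), W x) + ∫ x in (a+c)..(b+c), W x = ∫ x in a..(b+c), W x :=
      intervalIntegral.integral_add_adjacent_intervals (hWint _ _) (hWint _ _)
    have hadd2 : (∫ x in a..b, W x) + ∫ x in b..(b+c), W x = ∫ x in a..(b+c), W x :=
      intervalIntegral.integral_add_adjacent_intervals (hWint _ _) (hWint _ _)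
    have hconst : ∫ x in b..(b+c), W x = c * w b := by
      rw [intervalIntegral.integral_congr (g := fun _ => w b)
        (fun x hx => by
          rw [uIcc_of_le (by linarith)] at hx
          exact hWeq_ge x hx.1)]
      rw [intervalIntegral.integral_const, show b + c - b = c from by ring, smul_eq_mul]
    have hlow : c * w a ≤ ∫ x in a..(a+c), W x := by
      have := intervalIntegral.integral_mono_on (by linarith : a ≤ a + c)
        (intervalIntegrable_const (c := w a)) (hWint a (a+c)) (fun x _ => hWa x)
      rw [intervalIntegral.integral_const] at this
      calc c * w a = (a + c - a) • w a := by simp [smul_eq_mul]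
      _ ≤ _ := this
    linarith
  -- the sequence of difference quotients
  set c : ℕ → ℝ := fun n => ((n : ℝ) + 1)⁻¹ with hcdef
  have hcpos : ∀ n, 0 < c n := fun n => by positivity
  set F : ℕ → ℝ → ℝ := fun n x => ((n : ℝ) + 1) * (W (x + c n) - W x) with hFdef
  have hF0 : ∀ n x, 0 ≤ F n x := fun n x =>
    mul_nonneg (by positivity) (sub_nonneg.2 (hWmono (by linarith [hcpos n])))
  have hFmeas : ∀ n, Measurable (F n) := fun n =>
    measurable_const.mul ((hWmeas.comp (measurable_id.add_const _)).sub hWmeas)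
  have hFint : ∀ n, IntegrableOn (F n) (Ioc a b) volume := by
    intro n
    refine (intervalIntegrable_iff_integrableOn_Ioc_of_le hab).1 ?_
    have hshift : IntervalIntegrable (fun x => W (x + c n)) volume a b := by
      have := (hWint (a + c n) (b + c n)).comp_add_right (c n)
      simpa using this
    exact ((hshift.sub (hWint a b)).const_mul _)
  have hFbound : ∀ n, ∫ x in Ioc a b, F n x ≤ w b - w a := by
    intro n
    rw [← intervalIntegral.integral_of_le hab]
    have : ∫ x in a..b, F n x = ((n:ℝ)+1) * ∫ x in a..b, (W (x + c n) - W x) := by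
      simp only [hFdef]
      rw [← intervalIntegral.integral_const_mul]
    rw [this]
    have := key (c n) (hcpos n)
    have hmul := mul_le_mul_of_nonneg_left this (by positivity : (0:ℝ) ≤ (n:ℝ)+1)
    calc ((n:ℝ)+1) * ∫ x in a..b, (W (x + c n) - W x)
        ≤ ((n:ℝ)+1) * (c n * (w b - w a)) := hmul
      _ = w b - w a := by
          rw [hcdef]
          field_simp
  -- a.e. liminf lower bound
  have hlim : ∀ᵐ x ∂(volume.restrict (Ioc a b)),
      ENNReal.ofReal (φ x) ≤ liminf (fun n => ENNReal.ofReal (F n x)) atTop := by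
    rw [← Measure.restrict_congr_set Ioo_ae_eq_Ioc]
    filter_upwards [hd, ae_restrict_mem measurableSet_Ioo] with x hx hmem
    obtain ⟨d, hdw, hφd⟩ := hx
    have hWd : HasDerivAt W d x := by
      refine hdw.congr_of_eventuallyEq ?_
      filter_upwards [Ioo_mem_nhds hmem.1 hmem.2] with y hy
      exact hWeq_on y (Ioo_subset_Icc_self hy)
    have hseq : Tendsto (fun n => x + c n) atTop (nhdsWithin x {x}ᶜ) := by
      refine tendsto_nhdsWithin_of_tendsto_nhds_of_eventually_within _ ?_ ?_
      · have : Tendsto c atTop (nhds 0) := by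
          simpa [hcdef, one_div] using tendsto_one_div_add_atTop_nhds_zero_nat (𝕜 := ℝ)
        have := this.const_add x
        simpa using this
      · refine Eventually.of_forall fun n => ?_
        simp only [mem_compl_iff, mem_singleton_iff]
        intro hcontra
        have := hcpos n
        linarith
    have hslope := (hasDerivAt_iff_tendsto_slope.1 hWd).comp hseq
    have hFtend : Tendsto (fun n => F n x) atTop (nhds d) := by
      refine hslope.congr fun n => ?_
      simp only [Function.comp_apply, slope_def_field, hFdef]
      have h1 : x + c n - x = c n := by ring
      rw [h1, div_eq_mul_inv, hcdef]
      simp only [inv_inv]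
      ring
    have := ((ENNReal.continuous_ofReal.tendsto d).comp hFtend).liminf_eq
    rw [show (fun n => ENNReal.ofReal (F n x)) = ENNReal.ofReal ∘ (fun n => F n x) from rfl, this]
    exact ENNReal.ofReal_le_ofReal hφd
  -- put everything together via Fatou
  have hφae : 0 ≤ᶠ[ae (volume.restrict (Ioc a b))] φ :=
    (ae_restrict_iff' measurableSet_Ioc).2 (Eventually.of_forall hφ0)
  have h1 : ENNReal.ofReal (∫ x in Ioc a b, φ x) = ∫⁻ x in Ioc a b, ENNReal.ofReal (φ x) :=
    ofReal_integral_eq_lintegral_ofReal hφ_int hφae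
  have h2 : ∫⁻ x in Ioc a b, ENNReal.ofReal (φ x)
      ≤ ∫⁻ x in Ioc a b, liminf (fun n => ENNReal.ofReal (F n x)) atTop :=
    lintegral_mono_ae hlim
  have h3 : ∫⁻ x in Ioc a b, liminf (fun n => ENNReal.ofReal (F n x)) atTop
      ≤ liminf (fun n => ∫⁻ x in Ioc a b, ENNReal.ofReal (F n x)) atTop :=
    lintegral_liminf_le fun n => ENNReal.measurable_ofReal.comp (hFmeas n)
  have h4 : ∀ n, ∫⁻ x in Ioc a b, ENNReal.ofReal (F n x) ≤ ENNReal.ofReal (w b - w a) := by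
    intro n
    rw [← ofReal_integral_eq_lintegral_ofReal (hFint n)
      ((ae_restrict_iff' measurableSet_Ioc).2 (Eventually.of_forall fun x _ => hF0 n x))]
    exact ENNReal.ofReal_le_ofReal (hFbound n)
  have h5 : liminf (fun n => ∫⁻ x in Ioc a b, ENNReal.ofReal (F n x)) atTop
      ≤ ENNReal.ofReal (w b - w a) := by
    calc liminf (fun n => ∫⁻ x in Ioc a b, ENNReal.ofReal (F n x)) atTop
        ≤ liminf (fun _ : ℕ => ENNReal.ofReal (w b - w a)) atTop :=
          liminf_le_liminf (Eventually.of_forall h4)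
      _ = ENNReal.ofReal (w b - w a) := liminf_const _
  have hwba : 0 ≤ w b - w a := sub_nonneg.2 (hw ⟨le_rfl, hab⟩ ⟨hab, le_rfl⟩ hab)
  have hfinal : ENNReal.ofReal (∫ x in Ioc a b, φ x) ≤ ENNReal.ofReal (w b - w a) := by
    rw [h1]; exact le_trans h2 (le_trans h3 h5)
  exact (ENNReal.ofReal_le_ofReal_iff hwba).1 hfinal

/-- **Comparison Lemma.** Let `β > 1`, `s ≤ t`, `q > 0`, and let `h ∈ L¹([s,t])` be
nonnegative. Let `v : [s,t] → [0,∞)` be absolutely continuous (expressed via an a.e.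
derivative `v'` together with the fundamental theorem of calculus) with `v s ≤ q` and
`v' r ≤ -h r * v r ^ β` for a.e. `r ∈ [s,t]`. Then
`v r ≤ (q ^ (-(β-1)) + (β-1) * ∫_s^r h)^(-1/(β-1))` for all `r ∈ [s,t]`. -/
theorem comparison_lemma
    (β s t q : ℝ) (hβ : 1 < β) (hst : s ≤ t) (hq : 0 < q)
    (h v v' : ℝ → ℝ)
    (hh_int : IntegrableOn h (Icc s t))
    (hh_nonneg : ∀ r ∈ Icc s t, 0 ≤ h r)
    (hv_nonneg : ∀ r ∈ Icc s t, 0 ≤ v r)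
    (hv'_int : IntegrableOn v' (Icc s t))
    (hv_deriv : ∀ᵐ r ∂(volume.restrict (Icc s t)), HasDerivAt v (v' r) r)
    (hv_ftc : ∀ r ∈ Icc s t, v r = v s + ∫ τ in Ioc s r, v' τ)
    (hsub : ∀ᵐ r ∂(volume.restrict (Icc s t)), v' r ≤ - h r * v r ^ β)
    (hvs : v s ≤ q) :
    ∀ r ∈ Icc s t,
      v r ≤ (q ^ (-(β - 1)) + (β - 1) * ∫ τ in Ioc s r, h τ) ^ (-1 / (β - 1)) := by
  have ha : (0:ℝ) < β - 1 := by linarith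
  -- v' is a.e. nonpositive on [s,t]
  have hv'_nonpos : ∀ᵐ r ∂(volume.restrict (Icc s t)), v' r ≤ 0 := by
    filter_upwards [hsub, ae_restrict_mem measurableSet_Icc] with r h1 h2
    have : 0 ≤ h r * v r ^ β :=
      mul_nonneg (hh_nonneg r h2) (Real.rpow_nonneg (hv_nonneg r h2) β)
    linarith
  -- v is nonincreasing on [s,t]
  have hanti : ∀ x ∈ Icc s t, ∀ y ∈ Icc s t, x ≤ y → v y ≤ v x := by
    intro x hx y hy hxy
    have hsplit : Ioc s x ∪ Ioc x y = Ioc s y := Ioc_union_Ioc_eq_Ioc hx.1 hxy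
    have hsub1 : Ioc s x ⊆ Icc s t := fun z hz => ⟨hz.1.le, hz.2.trans hx.2⟩
    have hsub2 : Ioc x y ⊆ Icc s t := fun z hz => ⟨hx.1.trans hz.1.le, hz.2.trans hy.2⟩
    have hint1 : IntegrableOn v' (Ioc s x) := hv'_int.mono_set hsub1
    have hint2 : IntegrableOn v' (Ioc x y) := hv'_int.mono_set hsub2
    have hu := setIntegral_union (f := v') (μ := volume) (Ioc_disjoint_Ioc_of_le le_rfl)
      measurableSet_Ioc hint1 hint2
    rw [hsplit] at hu
    have hneg : ∫ τ in Ioc x y, v' τ ≤ 0 :=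
      integral_nonpos_of_ae (ae_restrict_of_ae_restrict_of_subset hsub2 hv'_nonpos)
    rw [hv_ftc x hx, hv_ftc y hy]
    linarith
  intro r0 hr0
  have hIoc_sub : Ioc s r0 ⊆ Icc s t := fun z hz => ⟨hz.1.le, hz.2.trans hr0.2⟩
  have hH0 : 0 ≤ ∫ τ in Ioc s r0, h τ :=
    setIntegral_nonneg measurableSet_Ioc fun z hz => hh_nonneg z (hIoc_sub hz)
  have hBpos : (0:ℝ) < q ^ (-(β - 1)) + (β - 1) * ∫ τ in Ioc s r0, h τ :=
    add_pos_of_pos_of_nonneg (Real.rpow_pos_of_pos hq _) (mul_nonneg ha.le hH0)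
  by_cases hm : v r0 ≤ 0
  · exact le_trans hm (Real.rpow_pos_of_pos hBpos _).le
  push_neg at hm
  -- v is positive on [s, r0]
  have hpos : ∀ x ∈ Icc s r0, 0 < v x := fun x hx =>
    lt_of_lt_of_le hm (hanti x ⟨hx.1, hx.2.trans hr0.2⟩ r0 hr0 hx.2)
  set w : ℝ → ℝ := fun x => v x ^ (-(β - 1)) with hwdef
  have hwmono : MonotoneOn w (Icc s r0) := by
    intro x hx y hy hxy
    exact Real.rpow_le_rpow_of_nonpos (hpos y hy)
      (hanti x ⟨hx.1, hx.2.trans hr0.2⟩ y ⟨hy.1, hy.2.trans hr0.2⟩ hxy)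
      (by linarith)
  set φ : ℝ → ℝ := fun x => (β - 1) * h x with hφdef
  have hφ_int : IntegrableOn φ (Ioc s r0) := (hh_int.mono_set hIoc_sub).const_mul _
  have hφ0 : ∀ x ∈ Ioc s r0, 0 ≤ φ x := fun x hx =>
    mul_nonneg ha.le (hh_nonneg x (hIoc_sub hx))
  have hIoo_sub : Ioo s r0 ⊆ Icc s t := fun z hz => ⟨hz.1.le, hz.2.le.trans hr0.2⟩
  have hd : ∀ᵐ x ∂(volume.restrict (Ioo s r0)), ∃ d, HasDerivAt w d x ∧ φ x ≤ d := by
    filter_upwards [ae_restrict_of_ae_restrict_of_subset hIoo_sub hv_deriv,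
      ae_restrict_of_ae_restrict_of_subset hIoo_sub hsub,
      ae_restrict_mem measurableSet_Ioo] with x hder hsub' hx
    have hvx : 0 < v x := hpos x ⟨hx.1.le, hx.2.le⟩
    have hxmem : x ∈ Icc s t := hIoo_sub hx
    refine ⟨v' x * (-(β - 1)) * v x ^ (-(β - 1) - 1), hder.rpow_const (Or.inl hvx.ne'), ?_⟩
    have hkey : v x ^ (-(β - 1) - 1) * v x ^ β = 1 := by
      rw [← Real.rpow_add hvx]
      have : -(β - 1) - 1 + β = 0 := by ring
      rw [this, Real.rpow_zero]
    have hc : (0:ℝ) < (β - 1) * v x ^ (-(β - 1) - 1) :=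
      mul_pos ha (Real.rpow_pos_of_pos hvx _)
    have hmul := mul_le_mul_of_nonneg_left hsub' hc.le
    have hrhs : (β - 1) * v x ^ (-(β - 1) - 1) * (-h x * v x ^ β) = -((β - 1) * h x) := by
      calc (β - 1) * v x ^ (-(β - 1) - 1) * (-h x * v x ^ β)
          = -((β - 1) * h x) * (v x ^ (-(β - 1) - 1) * v x ^ β) := by ring
        _ = -((β - 1) * h x) := by rw [hkey, mul_one]
    rw [hrhs] at hmul
    simp only [hφdef]
    nlinarith
  have happly := mono_ftc_le hr0.1 hwmono hφ_int hφ0 hd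
  have hintφ : ∫ x in Ioc s r0, φ x = (β - 1) * ∫ τ in Ioc s r0, h τ := by
    simp only [hφdef]
    exact integral_const_mul _ _
  have hvs_pos : 0 < v s := hpos s ⟨le_rfl, hr0.1⟩
  have hws : q ^ (-(β - 1)) ≤ w s :=
    Real.rpow_le_rpow_of_nonpos hvs_pos hvs (by linarith)
  have hB_le : q ^ (-(β - 1)) + (β - 1) * ∫ τ in Ioc s r0, h τ ≤ w r0 := by
    rw [hintφ] at happly
    linarith
  have hz : -1 / (β - 1) ≤ 0 := by
    rw [div_nonpos_iff]
    right
    constructor <;> linarith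
  have hfinal := Real.rpow_le_rpow_of_nonpos (z := -1 / (β - 1)) hBpos hB_le hz
  have hwr0 : w r0 ^ (-1 / (β - 1)) = v r0 := by
    simp only [hwdef]
    rw [← Real.rpow_mul hm.le]
    have : -(β - 1) * (-1 / (β - 1)) = 1 := by
      field_simp
    rw [this, Real.rpow_one]
  rw [hwr0] at hfinal
  exact hfinal
end

section
/- A priori bound for superlinear ODE subsolutions: Let β > 1, let p : ℝ → [0,∞) be right-continuous with left limits (càdlàg), let h ∈ C(ℝ) be positive, and assume ∫_s^t h(τ)dτ → ∞ as s → −∞, for every t ∈ ℝ. Suppose that for each s ∈ ℝ, v(·,s) : [s,∞) → [0,∞) is absolutely continuous on compact intervals and satisfies v'(r,s) ≤ −h(r)·v(r,s)^β + p(r) for almost every r ≥ s. Then for each t ∈ ℝ there exist s₀ = s₀(β,t,p,h) ≤ t and R = R(β,t,p,h) > 0, depending only on β, t, p and h (and not on the family v or its initial values), such that v(t,s) ≤ R for all s ≤ s₀. -/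
open MeasureTheory Set Filter


lemma cadlag_bddAbove (p : ℝ → ℝ)
    (hp_rc : ∀ x, ContinuousWithinAt p (Ici x) x)
    (hp_ll : ∀ x : ℝ, ∃ l : ℝ, Tendsto p (nhdsWithin x (Iio x)) (nhds l))
    {K : Set ℝ} (hK : IsCompact K) : ∃ C, ∀ x ∈ K, p x ≤ C := by
  refine hK.induction_on ⟨0, by simp⟩ ?_ ?_ ?_
  · rintro s u hsu ⟨C, hC⟩
    exact ⟨C, fun x hx => hC x (hsu hx)⟩
  · rintro s u ⟨C1, h1⟩ ⟨C2, h2⟩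
    refine ⟨max C1 C2, ?_⟩
    rintro x (hx | hx)
    · exact (h1 x hx).trans (le_max_left _ _)
    · exact (h2 x hx).trans (le_max_right _ _)
  · intro x _
    obtain ⟨l, hl⟩ := hp_ll x
    have h1 : ∀ᶠ y in nhdsWithin x (Ici x), p y ≤ p x + 1 :=
      (hp_rc x).eventually_le_const (lt_add_one _)
    have h2 : ∀ᶠ y in nhdsWithin x (Iio x), p y ≤ l + 1 :=
      hl.eventually_le_const (lt_add_one _)
    have h3 : ∀ᶠ y in nhds x, p y ≤ max (p x + 1) (l + 1) := by
      rw [← nhdsLT_sup_nhdsGE x, eventually_sup]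
      constructor
      · exact h2.mono fun y hy => hy.trans (le_max_right _ _)
      · exact h1.mono fun y hy => hy.trans (le_max_left _ _)
    exact ⟨{y | p y ≤ max (p x + 1) (l + 1)}, mem_nhdsWithin_of_mem_nhds h3,
      max (p x + 1) (l + 1), fun y hy => hy⟩

/-- The explicit backward blow-up supersolution of `y' = -c y^β`. -/
lemma g_hasDerivAt (β c a : ℝ) (hβ : 1 < β) (hc : 0 < c) {u : ℝ} (hu : a < u) :
    HasDerivAt (fun y => ((β-1)*c*(y-a)) ^ (-(β-1)⁻¹))
      (-c * (((β-1)*c*(u-a)) ^ (-(β-1)⁻¹)) ^ β) u := by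
  have hb : (0:ℝ) < β - 1 := by linarith
  have hKpos : 0 < (β-1)*c := mul_pos hb hc
  have hpos : 0 < (β-1)*c*(u-a) := mul_pos hKpos (by linarith)
  have hinner : HasDerivAt (fun y => (β-1)*c*(y-a)) ((β-1)*c) u := by
    simpa using ((hasDerivAt_id u).sub_const a).const_mul ((β-1)*c)
  have hd := hinner.rpow_const (p := -(β-1)⁻¹) (Or.inl hpos.ne')
  convert hd using 1
  rw [← Real.rpow_mul hpos.le]
  have he : (-(β-1)⁻¹) * β = -(β-1)⁻¹ - 1 := by
    field_simp
    ring
  rw [he]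
  have hKe : (β-1)*c * (-(β-1)⁻¹) = -c := by
    field_simp
  calc -c * ((β-1)*c*(u-a)) ^ (-(β-1)⁻¹ - 1)
      = ((β-1)*c * (-(β-1)⁻¹)) * ((β-1)*c*(u-a)) ^ (-(β-1)⁻¹ - 1) := by rw [hKe]
    _ = (β-1)*c * (-(β-1)⁻¹) * ((β-1)*c*(u-a)) ^ (-(β-1)⁻¹ - 1) := by ring


/-- **A priori bound for superlinear ODE subsolutions.** Let `β > 1`, let `p : ℝ → [0,∞)`
be càdlàg, let `h` be continuous and positive with `∫_s^t h → ∞` as `s → -∞` for every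
`t`. Then for each `t` there exist `s₀ ≤ t` and `R > 0`, depending only on `β, t, p, h`
(they are chosen before any subsolution family is given), such that every nonnegative
family `v(·,s)` of locally absolutely continuous subsolutions of
`y' = -h·y^β + p` on `[s,∞)` satisfies `v(t,s) ≤ R` for all `s ≤ s₀`. -/
theorem apriori_bound_superlinear
    (β : ℝ) (hβ : 1 < β) (t : ℝ)
    (p : ℝ → ℝ) (hp_nonneg : ∀ r, 0 ≤ p r)
    (hp_rc : ∀ x, ContinuousWithinAt p (Ici x) x)
    (hp_ll : ∀ x : ℝ, ∃ l : ℝ, Tendsto p (nhdsWithin x (Iio x)) (nhds l))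
    (h : ℝ → ℝ) (hh_cont : Continuous h) (hh_pos : ∀ r, 0 < h r)
    (hh_div : ∀ u : ℝ, Tendsto (fun s => ∫ τ in Ioc s u, h τ) atBot atTop) :
    ∃ s₀ ≤ t, ∃ R > 0,
      ∀ v v' : ℝ → ℝ → ℝ,
        (∀ s r, s ≤ r → 0 ≤ v r s) →
        (∀ s T, s ≤ T → IntegrableOn (fun r => v' r s) (Icc s T)) →
        (∀ s r, s ≤ r → v r s = v s s + ∫ τ in Ioc s r, v' τ s) →
        (∀ s, ∀ᵐ r ∂(volume.restrict (Ici s)), HasDerivAt (fun u => v u s) (v' r s) r) →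
        (∀ s, ∀ᵐ r ∂(volume.restrict (Ici s)), v' r s ≤ - h r * v r s ^ β + p r) →
        ∀ s ≤ s₀, v t s ≤ R := by
  classical
  obtain ⟨C₀, hC₀⟩ := cadlag_bddAbove p hp_rc hp_ll (isCompact_Icc (a := t-1) (b := t))
  set C := max C₀ 0 with hCdef
  have hC0 : 0 ≤ C := le_max_right _ _
  have hC : ∀ x ∈ Icc (t-1) t, p x ≤ C := fun x hx => (hC₀ x hx).trans (le_max_left _ _)
  obtain ⟨x₀, hx₀I, hx₀min⟩ := isCompact_Icc.exists_isMinOn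
    (nonempty_Icc.2 (by linarith : t - 1 ≤ t)) hh_cont.continuousOn
  set hm := h x₀ with hmdef
  have hm_pos : 0 < hm := hh_pos x₀
  have hmle : ∀ u ∈ Icc (t-1) t, hm ≤ h u := fun u hu => isMinOn_iff.mp hx₀min u hu
  set c := hm / 2 with hcdef
  have hc : 0 < c := by positivity
  set M := max 1 (2*(C+1)/hm) with hMdef
  have hM1 : (1:ℝ) ≤ M := le_max_left _ _
  have hM0 : (0:ℝ) < M := by linarith
  have key : ∀ u ∈ Icc (t-1) t, ∀ y : ℝ, M ≤ y → -h u * y ^ β + p u ≤ -c * y ^ β := by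
    intro u hu y hy
    have hyβ : M ≤ y ^ β := by
      calc M = M ^ (1:ℝ) := (Real.rpow_one M).symm
        _ ≤ M ^ β := Real.rpow_le_rpow_of_exponent_le hM1 hβ.le
        _ ≤ y ^ β := Real.rpow_le_rpow hM0.le hy (by linarith)
    have hmM : 2*(C+1) ≤ hm * M := by
      have h1 : 2*(C+1)/hm ≤ M := le_max_right _ _
      rw [div_le_iff₀ hm_pos] at h1
      linarith [h1]
    have hpu : p u ≤ C := hC u hu
    have hhu : hm ≤ h u := hmle u hu
    have hy0 : 0 ≤ y ^ β := le_trans hM0.le hyβ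
    nlinarith [mul_le_mul_of_nonneg_left hyβ (by positivity : (0:ℝ) ≤ hm/2),
      mul_le_mul_of_nonneg_right hhu hy0]
  set e := -(β-1)⁻¹ with hedef
  have hb : (0:ℝ) < β - 1 := by linarith
  have he0 : e ≤ 0 := by rw [hedef]; simp [inv_nonneg.2 hb.le]
  set K := (β-1)*c with hKdef
  have hK : 0 < K := mul_pos hb hc
  set g : ℝ → ℝ := fun u => (K*(u-(t-1))) ^ e with hgdef
  have hgpos : ∀ u, t - 1 < u → 0 < g u := by
    intro u hu
    exact Real.rpow_pos_of_pos (mul_pos hK (by linarith)) e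
  have hgd : ∀ u, t - 1 < u → HasDerivAt g (-c * g u ^ β) u := by
    intro u hu
    rw [hgdef]
    simpa only [← hKdef, ← hedef] using g_hasDerivAt β c (t-1) hβ hc hu
  have hgt_pos : 0 < g t := hgpos t (by linarith)
  refine ⟨t - 1, by linarith, max M (g t), lt_of_lt_of_le hM0 (le_max_left _ _), ?_⟩
  intro v v' hv0 hv'int hvint hvderiv hvineq s hs
  have hst : s ≤ t := by linarith
  have hcont : ContinuousOn (fun u => v u s) (Icc s t) := by
    have h1 : ContinuousOn (fun u => v s s + ∫ τ in Ioc s u, v' τ s) (Icc s t) :=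
      continuousOn_const.add (intervalIntegral.continuousOn_primitive (hv'int s t hst))
    exact h1.congr fun u hu => hvint s u hu.1
  have hadd : ∀ a b : ℝ, s ≤ a → a ≤ b → b ≤ t →
      v b s = v a s + ∫ τ in Ioc a b, v' τ s := by
    intro a b hsa hab hbt
    have hsplit : Ioc s a ∪ Ioc a b = Ioc s b := Ioc_union_Ioc_eq_Ioc hsa hab
    have hint : IntegrableOn (fun τ => v' τ s) (Icc s t) := hv'int s t hst
    have h1 : IntegrableOn (fun τ => v' τ s) (Ioc s a) :=
      hint.mono_set fun x hx => ⟨hx.1.le, hx.2.trans (hab.trans hbt)⟩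
    have h2 : IntegrableOn (fun τ => v' τ s) (Ioc a b) :=
      hint.mono_set fun x hx => ⟨hsa.trans hx.1.le, hx.2.trans hbt⟩
    rw [hvint s b (hsa.trans hab), hvint s a hsa, ← hsplit,
      setIntegral_union (Ioc_disjoint_Ioc_of_le le_rfl) measurableSet_Ioc h1 h2]
    ring
  have hae : ∀ a, t - 1 ≤ a → (∀ u ∈ Ioc a t, M ≤ v u s) →
      ∀ᵐ r ∂(volume.restrict (Ioc a t)), v' r s ≤ -c * v r s ^ β := by
    intro a ha1 hMv
    have hsub : Ioc a t ⊆ Ici s := fun x hx => le_trans (by linarith : s ≤ a) hx.1.le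
    have h1 := ae_restrict_of_ae_restrict_of_subset hsub (hvineq s)
    filter_upwards [h1, ae_restrict_mem measurableSet_Ioc] with r hr hrmem
    have hrI : r ∈ Icc (t-1) t := ⟨le_trans ha1 hrmem.1.le, hrmem.2⟩
    exact hr.trans (key r hrI _ (hMv r hrmem))
  by_cases hcase : ∃ u ∈ Icc (t-1) t, v u s ≤ M
  · -- Case 1 : v dips below M on [t-1, t]
    set A := Icc (t-1) t ∩ (fun u => v u s) ⁻¹' Iic M with hAdef
    have hAc : IsClosed A :=
      (hcont.mono (Icc_subset_Icc (by linarith) le_rfl)).preimage_isClosed_of_isClosed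
        isClosed_Icc isClosed_Iic
    have hAne : A.Nonempty := by
      obtain ⟨u, hu1, hu2⟩ := hcase; exact ⟨u, hu1, hu2⟩
    have hAbdd : BddAbove A := bddAbove_Icc.mono inter_subset_left
    set r := sSup A with hrdef
    have hrA : r ∈ A := hAc.csSup_mem hAne hAbdd
    have hr1 : r ∈ Icc (t-1) t := hrA.1
    have hrM : v r s ≤ M := hrA.2
    have hgtM : ∀ u ∈ Ioc r t, M ≤ v u s := by
      intro u hu
      by_contra hlt
      push_neg at hlt
      have : u ∈ A := ⟨⟨hr1.1.trans hu.1.le, hu.2⟩, hlt.le⟩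
      exact absurd (le_csSup hAbdd this) (not_le.2 hu.1)
    have hneg : ∀ᵐ τ ∂(volume.restrict (Ioc r t)), v' τ s ≤ 0 := by
      filter_upwards [hae r hr1.1 hgtM, ae_restrict_mem measurableSet_Ioc] with τ hτ hτm
      have h0 : 0 ≤ v τ s ^ β :=
        Real.rpow_nonneg (hv0 s τ (le_trans (by linarith [hr1.1] : s ≤ r) hτm.1.le)) β
      nlinarith
    have hint0 : (∫ τ in Ioc r t, v' τ s) ≤ 0 := integral_nonpos_of_ae hneg
    calc v t s = v r s + ∫ τ in Ioc r t, v' τ s :=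
          hadd r t (by linarith [hr1.1]) hr1.2 le_rfl
      _ ≤ M + 0 := add_le_add hrM hint0
      _ ≤ max M (g t) := by simpa using le_max_left M (g t)
  · -- Case 2 : v > M on all of [t-1, t]
    push_neg at hcase
    obtain ⟨xB, hxBI, hxBmax⟩ := isCompact_Icc.exists_isMaxOn
      (nonempty_Icc.2 (by linarith : t - 1 ≤ t))
      (hcont.mono (Icc_subset_Icc hs le_rfl))
    set B := max (v xB s) 1 with hBdef
    have hB1 : (1:ℝ) ≤ B := le_max_right _ _
    have hBb : ∀ u ∈ Icc (t-1) t, v u s ≤ B :=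
      fun u hu => (isMaxOn_iff.mp hxBmax u hu).trans (le_max_left _ _)
    set x₁ := min 1 (B ^ (-(β-1)) / K) with hx₁def
    have hx₁pos : 0 < x₁ :=
      lt_min one_pos (div_pos (Real.rpow_pos_of_pos (by linarith) _) hK)
    have hx₁le : x₁ ≤ 1 := min_le_left _ _
    set u₁ := (t-1) + x₁ with hu₁def
    have hu₁I : u₁ ∈ Icc (t-1) t := ⟨by linarith, by linarith⟩
    have hu₁gt : t - 1 < u₁ := by linarith
    have hKx₁ : K * x₁ ≤ B ^ (-(β-1)) := by
      calc K * x₁ ≤ K * (B ^ (-(β-1)) / K) :=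
            mul_le_mul_of_nonneg_left (min_le_right _ _) hK.le
        _ = B ^ (-(β-1)) := by field_simp
    have hKx₁pos : 0 < K * x₁ := mul_pos hK hx₁pos
    have hgu₁B : B ≤ g u₁ := by
      have h1 : (B ^ (-(β-1))) ^ e ≤ (K * x₁) ^ e :=
        Real.rpow_le_rpow_of_nonpos hKx₁pos hKx₁ he0
      have h2 : (B ^ (-(β-1))) ^ e = B := by
        rw [← Real.rpow_mul (by linarith : (0:ℝ) ≤ B)]
        have hme : (-(β-1)) * e = 1 := by rw [hedef]; field_simp
        rw [hme, Real.rpow_one]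
      have h3 : g u₁ = (K * x₁) ^ e := by
        rw [hgdef]
        norm_num [hu₁def]
      rw [h3, ← h2]
      exact h1
    have hg_cont : ContinuousOn g (Icc u₁ t) :=
      fun u hu => ((hgd u (lt_of_lt_of_le hu₁gt hu.1)).continuousAt).continuousWithinAt
    set A := Icc u₁ t ∩ (fun u => v u s - g u) ⁻¹' Iic 0 with hAdef
    have hsub2 : Icc u₁ t ⊆ Icc s t := Icc_subset_Icc (by linarith) le_rfl
    have hAc : IsClosed A :=
      ((hcont.mono hsub2).sub hg_cont).preimage_isClosed_of_isClosed
        isClosed_Icc isClosed_Iic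
    have hAne : A.Nonempty :=
      ⟨u₁, ⟨le_rfl, hu₁I.2⟩, by
        simp only [mem_preimage, mem_Iic, sub_nonpos]
        exact (hBb u₁ hu₁I).trans hgu₁B⟩
    have hAbdd : BddAbove A := bddAbove_Icc.mono inter_subset_left
    set r := sSup A with hrdef
    have hrA : r ∈ A := hAc.csSup_mem hAne hAbdd
    have hr1 : r ∈ Icc u₁ t := hrA.1
    have hrg : v r s ≤ g r := by
      have := hrA.2
      simpa [sub_nonpos] using this
    have hsr : s ≤ r := by linarith [hr1.1]
    have hrt : r ≤ t := hr1.2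
    have hrt1 : t - 1 < r := lt_of_lt_of_le hu₁gt hr1.1
    have hgt2 : ∀ u ∈ Ioc r t, g u ≤ v u s := by
      intro u hu
      by_contra hlt
      push_neg at hlt
      have : u ∈ A := ⟨⟨hr1.1.trans hu.1.le, hu.2⟩, by
        simp only [mem_preimage, mem_Iic, sub_nonpos]; exact hlt.le⟩
      exact absurd (le_csSup hAbdd this) (not_le.2 hu.1)
    have hMv2 : ∀ u ∈ Ioc r t, M ≤ v u s := by
      intro u hu
      exact (hcase u ⟨by linarith [hu.1], hu.2⟩).le
    -- integrabilities on Ioc r t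
    have hintv' : IntegrableOn (fun τ => v' τ s) (Ioc r t) :=
      (hv'int s t hst).mono_set fun x hx => ⟨hsr.trans hx.1.le, hx.2⟩
    have hcv : ContinuousOn (fun τ => -c * v τ s ^ β) (Icc r t) :=
      continuousOn_const.mul
        ((hcont.mono (Icc_subset_Icc hsr le_rfl)).rpow_const
          fun x _ => Or.inr (by linarith : (0:ℝ) ≤ β))
    have hintcv : IntegrableOn (fun τ => -c * v τ s ^ β) (Ioc r t) :=
      (hcv.integrableOn_Icc).mono_set Ioc_subset_Icc_self
    have hcg : ContinuousOn (fun τ => -c * g τ ^ β) (Icc r t) :=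
      continuousOn_const.mul
        ((hg_cont.mono (Icc_subset_Icc hr1.1 le_rfl)).rpow_const
          fun x _ => Or.inr (by linarith : (0:ℝ) ≤ β))
    have hintcg : IntegrableOn (fun τ => -c * g τ ^ β) (Ioc r t) :=
      (hcg.integrableOn_Icc).mono_set Ioc_subset_Icc_self
    have hI12 : (∫ τ in Ioc r t, v' τ s) ≤ ∫ τ in Ioc r t, -c * v τ s ^ β :=
      integral_mono_ae hintv' hintcv (hae r hrt1.le hMv2)
    have hI23 : (∫ τ in Ioc r t, -c * v τ s ^ β) ≤ ∫ τ in Ioc r t, -c * g τ ^ β := by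
      refine setIntegral_mono_on hintcv hintcg measurableSet_Ioc fun x hx => ?_
      have hg0 : 0 ≤ g x := (hgpos x (by linarith [hx.1])).le
      exact mul_le_mul_of_nonpos_left
        (Real.rpow_le_rpow hg0 (hgt2 x hx) (by linarith))
        (neg_nonpos.mpr hc.le)
    have hftc : (∫ τ in Ioc r t, -c * g τ ^ β) = g t - g r := by
      rw [← intervalIntegral.integral_of_le hrt]
      refine intervalIntegral.integral_eq_sub_of_hasDerivAt (fun u hu => ?_) ?_
      · rw [uIcc_of_le hrt] at hu
        exact hgd u (by linarith [hu.1])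
      · exact (hcg.mono (by rw [uIcc_of_le hrt])).intervalIntegrable
    calc v t s = v r s + ∫ τ in Ioc r t, v' τ s := hadd r t hsr hrt le_rfl
      _ ≤ g r + (g t - g r) := by
          rw [← hftc]
          exact add_le_add hrg (hI12.trans hI23)
      _ = g t := by ring
      _ ≤ max M (g t) := le_max_right _ _
end

section
/- Weak point attractors are weak interval attractors for order-preserving strongly mixing RDS: Let (Ω,F,P,{θ_t}_{t∈ℝ}) be an ergodic metric dynamical system, H a real separable Banach space with a normal cone H_+ and a positive-part map x ↦ x₊, and let φ be an order-preserving RDS on H over (Ω,{θ_t}) which is strongly mixing with some ergodic measure μ. Then every weak point random attractor for φ is a weak interval random attractor for φ; hence the two classes of random attractors coincide. -/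
open MeasureTheory ProbabilityTheory Filter
open scoped Classical NNReal ENNReal

/-- A metric dynamical system. -/
def IsMetricDynamicalSystem {Ω : Type*} [MeasurableSpace Ω]
    (P : Measure Ω) (θ : ℝ → Ω → Ω) : Prop :=
  Measurable (fun p : ℝ × Ω => θ p.1 p.2) ∧
  (∀ ω, θ 0 ω = ω) ∧
  (∀ s t ω, θ (t + s) ω = θ t (θ s ω)) ∧
  (∀ t, MeasurePreserving (θ t) P P)

/-- An ergodic metric dynamical system. -/
def IsErgodicMDS {Ω : Type*} [MeasurableSpace Ω]
    (P : Measure Ω) (θ : ℝ → Ω → Ω) : Prop :=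
  IsMetricDynamicalSystem P θ ∧
  ∀ B : Set Ω, MeasurableSet B → (∀ t, θ t ⁻¹' B = B) → P B = 0 ∨ P B = 1

/-- A random dynamical system on `H` over `(Ω, θ)`. -/
def IsRDS {Ω H : Type*} [MeasurableSpace Ω] [MeasurableSpace H]
    (θ : ℝ → Ω → Ω) (φ : ℝ≥0 → Ω → H → H) : Prop :=
  Measurable (fun p : ℝ≥0 × Ω × H => φ p.1 p.2.1 p.2.2) ∧
  (∀ ω x, φ 0 ω x = x) ∧
  (∀ (s t : ℝ≥0) (ω : Ω) (x : H), φ (t + s) ω x = φ t (θ (s : ℝ) ω) (φ s ω x))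

/-- A cone in a normed space: closed, convex, stable under nonnegative scaling, and
`H₊ ∩ (-H₊) = {0}`. -/
def IsCone {H : Type*} [NormedAddCommGroup H] [NormedSpace ℝ H] (Hp : Set H) : Prop :=
  IsClosed Hp ∧ Convex ℝ Hp ∧ (∀ c : ℝ, 0 ≤ c → ∀ x ∈ Hp, c • x ∈ Hp) ∧
  Hp ∩ {x | -x ∈ Hp} = {0}

/-- The partial order induced by a cone: `x ≤ y` iff `y - x ∈ H₊`. -/
def coneLE {H : Type*} [NormedAddCommGroup H] (Hp : Set H) (x y : H) : Prop :=
  y - x ∈ Hp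

/-- The order interval `[x,y]` induced by a cone. -/
def coneInterval {H : Type*} [NormedAddCommGroup H] (Hp : Set H) (x y : H) : Set H :=
  {z | coneLE Hp x z ∧ coneLE Hp z y}

/-- A normal cone: `0 ≤ x ≤ y` implies `‖x‖ ≤ c‖y‖` for some constant `c > 0`. -/
def IsNormalCone {H : Type*} [NormedAddCommGroup H] (Hp : Set H) : Prop :=
  ∃ c > (0 : ℝ), ∀ x y : H, x ∈ Hp → y - x ∈ Hp → ‖x‖ ≤ c * ‖y‖

/-- A positive-part map: `x₊ ≥ x` and `x₊ ≥ 0` for all `x`. -/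
def IsPositivePartMap {H : Type*} [NormedAddCommGroup H] (Hp : Set H)
    (pos : H → H) : Prop :=
  ∀ x, coneLE Hp x (pos x) ∧ pos x ∈ Hp

/-- The RDS `φ` is order-preserving w.r.t. the cone `H₊`. -/
def IsOrderPreservingRDS {Ω H : Type*} [NormedAddCommGroup H] (Hp : Set H)
    (φ : ℝ≥0 → Ω → H → H) : Prop :=
  ∀ (t : ℝ≥0) (ω : Ω) (x y : H), coneLE Hp x y → coneLE Hp (φ t ω x) (φ t ω y)

/-- Total variation distance between two measures. -/
noncomputable def tvDist {H : Type*} [MeasurableSpace H] (μ ν : Measure H) : ℝ≥0∞ :=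
  ⨆ A : {A : Set H // MeasurableSet A}, max (μ A.1 - ν A.1) (ν A.1 - μ A.1)

/-- The RDS `φ` is strongly mixing with ergodic measure `μ`: the law of `φ(t;·)x`
converges to `μ` in total variation as `t → ∞`, for every `x`. -/
def IsStronglyMixing {Ω H : Type*} [MeasurableSpace Ω] [MeasurableSpace H]
    (P : Measure Ω) (φ : ℝ≥0 → Ω → H → H) (μ : Measure H) : Prop :=
  ∀ x : H, Tendsto (fun t : ℝ≥0 => tvDist (P.map fun ω => φ t ω x) μ) atTop (nhds 0)

/-- Hausdorff semidistance `d(A,B) = sup_{a∈A} inf_{b∈B} ‖a-b‖`, `∞` if `A = ∅`. -/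
noncomputable def hausSemidist {H : Type*} [PseudoEMetricSpace H] (A B : Set H) : ℝ≥0∞ :=
  if A.Nonempty then ⨆ a ∈ A, EMetric.infEdist a B else ⊤

/-- A random closed set: a.s. closed, with `ω ↦ d(x, A ω)` measurable. -/
def IsRandomClosedSet {Ω H : Type*} [MeasurableSpace Ω] [PseudoEMetricSpace H]
    (P : Measure Ω) (A : Ω → Set H) : Prop :=
  (∀ᵐ ω ∂P, IsClosed (A ω)) ∧ ∀ x : H, Measurable fun ω => EMetric.infEdist x (A ω)

/-- A weak random attractor for `φ` attracting the class `𝒞` of deterministic sets: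
a random closed set, a.s. nonempty and compact, attracting every `B ∈ 𝒞` in probability,
and invariant. -/
def IsWeakRandomAttractor {Ω H : Type*} [MeasurableSpace Ω]
    [NormedAddCommGroup H] [MeasurableSpace H]
    (P : Measure Ω) (θ : ℝ → Ω → Ω) (φ : ℝ≥0 → Ω → H → H)
    (𝒞 : Set (Set H)) (A : Ω → Set H) : Prop :=
  IsRandomClosedSet P A ∧
  (∀ᵐ ω ∂P, (A ω).Nonempty ∧ IsCompact (A ω)) ∧
  (∀ B ∈ 𝒞, ∀ ε : ℝ≥0∞, 0 < ε →
    Tendsto (fun t : ℝ≥0 => P {ω | ε ≤ hausSemidist (φ t ω '' B) (A ω)})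
      atTop (nhds 0)) ∧
  (∀ t : ℝ≥0, ∀ᵐ ω ∂P, φ t ω '' A ω = A (θ (t : ℝ) ω))

/-- The class of singletons of `H` (for weak point random attractors). -/
def pointClass (H : Type*) : Set (Set H) := {B | ∃ x : H, B = {x}}

/-- The class of order intervals `[x,y]`, `x ≤ y` (for weak interval random attractors). -/
def intervalClass {H : Type*} [NormedAddCommGroup H] (Hp : Set H) : Set (Set H) :=
  {B | ∃ x y : H, coneLE Hp x y ∧ B = coneInterval Hp x y}
section AuxLemmas

open Set Topology

variable {H : Type*}

lemma measure_le_add_tvDist [MeasurableSpace H] (ν₁ ν₂ : Measure H)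
    {S : Set H} (hS : MeasurableSet S) : ν₁ S ≤ ν₂ S + tvDist ν₁ ν₂ := by
  have h : ν₁ S - ν₂ S ≤ tvDist ν₁ ν₂ :=
    le_trans (le_max_left _ _)
      (le_iSup (fun A : {A : Set H // MeasurableSet A} =>
        max (ν₁ A.1 - ν₂ A.1) (ν₂ A.1 - ν₁ A.1)) ⟨S, hS⟩)
  exact (tsub_le_iff_right.mp h).trans_eq (add_comm _ _)

lemma measure_le_add_tvDist' [MeasurableSpace H] (ν₁ ν₂ : Measure H)
    {S : Set H} (hS : MeasurableSet S) : ν₂ S ≤ ν₁ S + tvDist ν₁ ν₂ := by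
  have h : ν₂ S - ν₁ S ≤ tvDist ν₁ ν₂ :=
    le_trans (le_max_right _ _)
      (le_iSup (fun A : {A : Set H // MeasurableSet A} =>
        max (ν₁ A.1 - ν₂ A.1) (ν₂ A.1 - ν₁ A.1)) ⟨S, hS⟩)
  exact (tsub_le_iff_right.mp h).trans_eq (add_comm _ _)

lemma zero_mem_cone [NormedAddCommGroup H] [NormedSpace ℝ H] {Hp : Set H}
    (hcone : IsCone Hp) : (0 : H) ∈ Hp := by
  have h := hcone.2.2.2
  have h0 : (0 : H) ∈ Hp ∩ {x | -x ∈ Hp} := by rw [h]; exact rfl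
  exact h0.1

lemma exists_pos_clm [NormedAddCommGroup H] [NormedSpace ℝ H] {Hp : Set H}
    (hcone : IsCone Hp) {v : H} (hv : v ∈ Hp) (hv0 : v ≠ 0) :
    ∃ g : H →L[ℝ] ℝ, (∀ w ∈ Hp, 0 ≤ g w) ∧ 0 < g v := by
  have hnv : -v ∉ Hp := by
    intro hmem
    have hmem2 : v ∈ Hp ∩ {x | -x ∈ Hp} := ⟨hv, hmem⟩
    rw [hcone.2.2.2] at hmem2
    exact hv0 hmem2
  obtain ⟨f, u, hfa, huf⟩ := geometric_hahn_banach_closed_point hcone.2.1 hcone.1 hnv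
  have hu0 : 0 < u := by have := hfa 0 (zero_mem_cone hcone); simpa using this
  have hfle : ∀ w ∈ Hp, f w ≤ 0 := by
    intro w hw
    by_contra hpos
    push_neg at hpos
    have hc : 0 ≤ (u + 1) / f w := div_nonneg (by linarith) hpos.le
    have h2 := hfa _ (hcone.2.2.1 _ hc w hw)
    rw [_root_.map_smul, smul_eq_mul, div_mul_cancel₀ _ (ne_of_gt hpos)] at h2
    linarith
  refine ⟨-f, fun w hw => by simpa using hfle w hw, ?_⟩
  have h3 : u < f (-v) := huf
  rw [map_neg] at h3
  simp only [ContinuousLinearMap.neg_apply]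
  linarith

lemma grid_lemma {R d u v : ℝ} (hd : 0 < d)
    (h1 : -R ≤ u) (h2 : u ≤ R) (h3 : u + 2 * d ≤ v) :
    ∃ j < Nat.floor (2 * R / d) + 1, u < -R + (j + 1) * d ∧ -R + (j + 1) * d ≤ v := by
  set j := Nat.floor ((u + R) / d) with hj
  have hnn : 0 ≤ (u + R) / d := div_nonneg (by linarith) hd.le
  refine ⟨j, ?_, ?_, ?_⟩
  · have hle : j ≤ Nat.floor (2 * R / d) := by
      apply Nat.floor_mono
      gcongr
      linarith
    omega
  · have h4 := Nat.lt_floor_add_one ((u + R) / d)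
    rw [div_lt_iff₀ hd] at h4
    nlinarith
  · have h5 := Nat.floor_le hnn
    rw [le_div_iff₀ hd] at h5
    nlinarith

lemma exists_compact_measure_compl_le [NormedAddCommGroup H]
    [CompleteSpace H] [TopologicalSpace.SeparableSpace H] [MeasurableSpace H]
    [OpensMeasurableSpace H]
    (μ : Measure H) [IsProbabilityMeasure μ] {δ : ℝ≥0∞} (hδ : 0 < δ) :
    ∃ K : Set H, IsCompact K ∧ μ Kᶜ ≤ δ := by
  have hne : Nonempty H := ⟨0⟩
  set u : ℕ → H := TopologicalSpace.denseSeq H with hu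
  have hdense : DenseRange u := TopologicalSpace.denseRange_denseSeq H
  have key : ∀ n : ℕ, ∃ F : Set H, IsClosed F ∧ μ Fᶜ ≤ δ / 2 ^ (n + 1) ∧
      ∃ N : ℕ, F ⊆ ⋃ m ∈ Finset.range (N + 1), Metric.closedBall (u m) (1 / (n + 1)) := by
    intro n
    have hr : (0 : ℝ) < 1 / (n + 1) := by positivity
    set f : ℕ → Set H := fun m => Metric.closedBall (u m) (1 / (n + 1)) with hf
    have hcov : ⋃ m, f m = univ := by
      ext z
      simp only [mem_iUnion, mem_univ, iff_true]
      obtain ⟨m, hm⟩ := hdense.exists_dist_lt z hr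
      exact ⟨m, by simpa [f, Metric.mem_closedBall, dist_comm] using hm.le⟩
    have htend : Tendsto (fun N => μ (accumulate f N)) atTop (𝓝 (μ (⋃ m, f m))) :=
      tendsto_measure_iUnion_accumulate
    rw [hcov, measure_univ] at htend
    have hδn : (0:ℝ≥0∞) < δ / 2 ^ (n + 1) := ENNReal.div_pos hδ.ne' (by simp)
    have hlt : (1 : ℝ≥0∞) - δ / 2 ^ (n + 1) < 1 :=
      ENNReal.sub_lt_self ENNReal.one_ne_top one_ne_zero hδn.ne'
    obtain ⟨N, hN⟩ := (htend.eventually_const_lt hlt).exists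
    have hclosed : IsClosed (accumulate f N) := by
      apply Set.Finite.isClosed_biUnion (Set.finite_Iic N)
      intro m _
      exact Metric.isClosed_closedBall
    refine ⟨accumulate f N, hclosed, ?_, N, ?_⟩
    · rw [measure_compl hclosed.measurableSet (measure_ne_top μ _), measure_univ,
        tsub_le_iff_left]
      calc (1:ℝ≥0∞) ≤ (δ / 2 ^ (n+1)) + ((1:ℝ≥0∞) - δ / 2 ^ (n+1)) := by
            rw [add_comm]; exact tsub_le_iff_right.mp le_rfl
        _ ≤ (δ / 2 ^ (n+1)) + μ (accumulate f N) := add_le_add_right hN.le _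
        _ = μ (accumulate f N) + (δ / 2 ^ (n+1)) := add_comm _ _
    · intro z hz
      rw [Set.mem_accumulate] at hz
      obtain ⟨m, hm, hzm⟩ := hz
      exact Set.mem_biUnion (Finset.mem_range.mpr (Nat.lt_succ_of_le hm)) hzm
  choose F hFclosed hFμ hFsub using key
  refine ⟨⋂ n, F n, ?_, ?_⟩
  · apply TotallyBounded.isCompact_of_isClosed
    · rw [Metric.totallyBounded_iff]
      intro ε hε
      obtain ⟨n, hn⟩ := exists_nat_one_div_lt hε
      obtain ⟨N, hN⟩ := hFsub n
      refine ⟨u '' (Set.Iic N), (Set.finite_Iic N).image u, ?_⟩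
      intro z hz
      have hzF : z ∈ F n := Set.mem_iInter.mp hz n
      obtain ⟨s, hs, hzs⟩ := Set.mem_iUnion₂.mp (hN hzF)
      refine Set.mem_biUnion ⟨s, Finset.mem_range.mp hs |> Nat.lt_succ_iff.mp, rfl⟩ ?_
      exact Metric.closedBall_subset_ball hn hzs
    · exact isClosed_iInter hFclosed
  · rw [Set.compl_iInter]
    refine (measure_iUnion_le _).trans ?_
    calc ∑' n, μ (F n)ᶜ ≤ ∑' n, δ / 2 ^ (n + 1) := ENNReal.tsum_le_tsum hFμ
      _ = δ := by
          have h1 : ∀ n : ℕ, δ / 2 ^ (n + 1) = δ * 2⁻¹ ^ (n + 1) := by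
            intro n; rw [div_eq_mul_inv, ENNReal.inv_pow]
          simp_rw [h1]
          rw [ENNReal.tsum_mul_left, ENNReal.tsum_geometric_add_one,
            ENNReal.one_sub_inv_two, inv_inv,
            ENNReal.inv_mul_cancel (two_ne_zero) ENNReal.ofNat_ne_top, mul_one]

end AuxLemmas
section Sync

open Set Topology

lemma sync_lemma {Ω H : Type*} [MeasurableSpace Ω]
    [NormedAddCommGroup H] [NormedSpace ℝ H] [CompleteSpace H]
    [TopologicalSpace.SeparableSpace H] [MeasurableSpace H] [BorelSpace H]
    (P : Measure Ω) [IsProbabilityMeasure P]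
    {Hp : Set H} (hcone : IsCone Hp)
    {φ : ℝ≥0 → Ω → H → H} (hmeas : ∀ (t : ℝ≥0) (z : H), Measurable (fun ω => φ t ω z))
    (horder : IsOrderPreservingRDS Hp φ)
    (μ : Measure H) [IsProbabilityMeasure μ]
    (hmix : IsStronglyMixing P φ μ)
    {x y : H} (hxy : coneLE Hp x y) {r : ℝ} (hr : 0 < r) :
    Tendsto (fun t : ℝ≥0 => P {ω | r ≤ ‖φ t ω y - φ t ω x‖}) atTop (𝓝 0) := by
  rw [ENNReal.tendsto_nhds_zero]
  suffices h : ∀ κ : ℝ≥0∞, 0 < κ → κ ≠ ⊤ →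
      ∀ᶠ t : ℝ≥0 in atTop, P {ω | r ≤ ‖φ t ω y - φ t ω x‖} ≤ κ by
    intro κ hκ
    rcases eq_or_ne κ ⊤ with rfl | hfin
    · exact (h 1 one_pos ENNReal.one_ne_top).mono fun t ht => ht.trans le_top
    · exact h κ hκ hfin
  intro κ hκ0 hκtop
  set tvx : ℝ≥0 → ℝ≥0∞ := fun t => tvDist (P.map fun ω => φ t ω x) μ with htvx
  set tvy : ℝ≥0 → ℝ≥0∞ := fun t => tvDist (P.map fun ω => φ t ω y) μ with htvy
  have hδ : (0:ℝ≥0∞) < κ / 2 / 2 := ENNReal.div_pos (ENNReal.div_pos hκ0.ne' ENNReal.ofNat_ne_top).ne' ENNReal.ofNat_ne_top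
  obtain ⟨K, hKcomp, hKμ⟩ := exists_compact_measure_compl_le μ hδ
  have hKm : MeasurableSet K := hKcomp.isClosed.measurableSet
  set K2 : Set H := (fun p : H × H => p.1 - p.2) '' (K ×ˢ K) with hK2
  have hK2comp : IsCompact K2 := (hKcomp.prod hKcomp).image (continuous_fst.sub continuous_snd)
  set S : Set H := (Hp ∩ {v : H | r ≤ ‖v‖}) ∩ K2 with hS
  have hScomp : IsCompact S :=
    hK2comp.inter_left (hcone.1.inter (isClosed_le continuous_const continuous_norm))
  have hsep : ∀ v : S, ∃ g : H →L[ℝ] ℝ, (∀ w ∈ Hp, 0 ≤ g w) ∧ 0 < g v := by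
    intro v
    have hv : (v : H) ∈ Hp := v.2.1.1
    have hvr : r ≤ ‖(v : H)‖ := v.2.1.2
    refine exists_pos_clm hcone hv ?_
    intro h0
    rw [h0, norm_zero] at hvr
    linarith
  choose g hgpos hgv using hsep
  have hcover : S ⊆ ⋃ v : S, (g v) ⁻¹' (Set.Ioi (g v v / 2)) := by
    intro w hw
    exact Set.mem_iUnion.mpr ⟨⟨w, hw⟩, by simpa using half_lt_self (hgv ⟨w, hw⟩)⟩
  obtain ⟨I, hI⟩ := hScomp.elim_finite_subcover
    (fun v : S => (g v) ⁻¹' (Set.Ioi (g v v / 2)))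
    (fun v => (isOpen_Ioi).preimage (g v).continuous) hcover
  have hbound : ∀ v : S, ∃ R : ℝ, 0 ≤ R ∧ ∀ a ∈ K, |g v a| ≤ R := by
    intro v
    obtain ⟨C, hC⟩ := hKcomp.exists_bound_of_continuousOn (g v).continuous.continuousOn
    exact ⟨max C 0, le_max_right _ _, fun a ha => (hC a ha).trans (le_max_left _ _)⟩
  choose R hR0 hRb using hbound
  set d : S → ℝ := fun v => g v v / 4 with hd
  have hdpos : ∀ v, 0 < d v := fun v => by have := hgv v; positivity
  set m : S → ℕ := fun v => Nat.floor (2 * R v / d v) + 1 with hm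
  set b : S → ℕ → ℝ := fun v j => -R v + (j + 1) * d v with hb
  set M : ℕ := ∑ v ∈ I, m v with hM
  -- threshold probability bound
  have hthr : ∀ (v : S) (bb : ℝ) (t : ℝ≥0),
      P {ω | g v (φ t ω x) < bb ∧ bb ≤ g v (φ t ω y)} ≤ tvx t + tvy t := by
    intro v bb t
    have hX := hmeas t x
    have hY := hmeas t y
    have hgm : MeasurableSet ((g v) ⁻¹' (Set.Iio bb)) :=
      (g v).continuous.measurable measurableSet_Iio
    set A1 : Set Ω := (fun ω => φ t ω x) ⁻¹' ((g v) ⁻¹' (Set.Iio bb)) with hA1def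
    set A2 : Set Ω := (fun ω => φ t ω y) ⁻¹' ((g v) ⁻¹' (Set.Iio bb)) with hA2def
    have hA2 : MeasurableSet A2 := hY hgm
    have hsub : A2 ⊆ A1 := by
      intro ω hω
      have hw : φ t ω y - φ t ω x ∈ Hp := horder t ω x y hxy
      have hle : g v (φ t ω x) ≤ g v (φ t ω y) := by
        have h2 := hgpos v _ hw
        rw [map_sub] at h2
        linarith
      have hω' : g v (φ t ω y) < bb := hω
      exact lt_of_le_of_lt hle hω'
    have hset : {ω | g v (φ t ω x) < bb ∧ bb ≤ g v (φ t ω y)} = A1 \ A2 := by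
      ext ω
      simp only [Set.mem_setOf_eq, Set.mem_diff, hA1def, hA2def, Set.mem_preimage,
        Set.mem_Iio, not_lt]
    rw [hset]
    have key : P A2 + P (A1 \ A2) = P A1 := by
      have h0 := measure_add_diff (μ := P) hA2.nullMeasurableSet A1
      rwa [Set.union_eq_self_of_subset_left hsub] at h0
    have h1 : P A1 ≤ μ ((g v) ⁻¹' (Set.Iio bb)) + tvx t := by
      have := measure_le_add_tvDist (P.map fun ω => φ t ω x) μ hgm
      rwa [Measure.map_apply hX hgm] at this
    have h2 : μ ((g v) ⁻¹' (Set.Iio bb)) ≤ P A2 + tvy t := by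
      have := measure_le_add_tvDist' (P.map fun ω => φ t ω y) μ hgm
      rwa [Measure.map_apply hY hgm] at this
    have h3 : P A2 + P (A1 \ A2) ≤ P A2 + (tvx t + tvy t) := by
      rw [key]
      calc P A1 ≤ μ ((g v) ⁻¹' (Set.Iio bb)) + tvx t := h1
        _ ≤ (P A2 + tvy t) + tvx t := add_le_add_left h2 _
        _ = P A2 + (tvx t + tvy t) := by ring
    exact (ENNReal.add_le_add_iff_left (measure_ne_top P A2)).mp h3
  -- event inclusion
  have hincl : ∀ t : ℝ≥0, {ω | r ≤ ‖φ t ω y - φ t ω x‖} ⊆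
      (((fun ω => φ t ω x) ⁻¹' Kᶜ) ∪ ((fun ω => φ t ω y) ⁻¹' Kᶜ)) ∪
      ⋃ v ∈ I, ⋃ j ∈ Finset.range (m v),
        {ω | g v (φ t ω x) < b v j ∧ b v j ≤ g v (φ t ω y)} := by
    intro t ω hω
    by_cases hXK : φ t ω x ∈ K
    · by_cases hYK : φ t ω y ∈ K
      · right
        set w : H := φ t ω y - φ t ω x with hwdef
        have hwS : w ∈ S := by
          refine ⟨⟨horder t ω x y hxy, hω⟩, ⟨(φ t ω y, φ t ω x), ⟨hYK, hXK⟩, rfl⟩⟩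
        obtain ⟨v, hvI, hvw⟩ := Set.mem_iUnion₂.mp (hI hwS)
        have hgw : g v v / 2 < g v w := hvw
        have hUV : g v w = g v (φ t ω y) - g v (φ t ω x) := by rw [map_sub]
        have habs := hRb v _ hXK
        rw [abs_le] at habs
        obtain ⟨j, hjm, hj1, hj2⟩ := grid_lemma (hdpos v) habs.1 habs.2
          (v := g v (φ t ω y)) (by
            have : g v (φ t ω x) + 2 * d v ≤ g v (φ t ω x) + g v w := by
              have : 2 * d v ≤ g v w := by
                rw [hd]; simp only []
                linarith
              linarith
            linarith [hUV ▸ this])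
        refine Set.mem_iUnion₂.mpr ⟨v, hvI, Set.mem_iUnion₂.mpr ⟨j, Finset.mem_range.mpr hjm, ?_⟩⟩
        exact ⟨hj1, hj2⟩
      · exact Or.inl (Or.inr hYK)
    · exact Or.inl (Or.inl hXK)
  -- probability bound
  have hbd : ∀ t : ℝ≥0, P {ω | r ≤ ‖φ t ω y - φ t ω x‖} ≤
      ((κ / 2 / 2 + tvx t) + (κ / 2 / 2 + tvy t)) + (M : ℝ≥0∞) * (tvx t + tvy t) := by
    intro t
    refine (measure_mono (hincl t)).trans ?_
    refine (measure_union_le _ _).trans ?_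
    gcongr
    · refine (measure_union_le _ _).trans ?_
      gcongr
      · have := measure_le_add_tvDist (P.map fun ω => φ t ω x) μ hKm.compl
        rw [Measure.map_apply (hmeas t x) hKm.compl] at this
        exact this.trans (add_le_add_left hKμ _)
      · have := measure_le_add_tvDist (P.map fun ω => φ t ω y) μ hKm.compl
        rw [Measure.map_apply (hmeas t y) hKm.compl] at this
        exact this.trans (add_le_add_left hKμ _)
    · refine (measure_biUnion_finset_le _ _).trans ?_
      calc ∑ v ∈ I, P (⋃ j ∈ Finset.range (m v),
            {ω | g v (φ t ω x) < b v j ∧ b v j ≤ g v (φ t ω y)})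
          ≤ ∑ v ∈ I, ∑ j ∈ Finset.range (m v), P
            {ω | g v (φ t ω x) < b v j ∧ b v j ≤ g v (φ t ω y)} := by
            refine Finset.sum_le_sum fun v _ => measure_biUnion_finset_le _ _
        _ ≤ ∑ v ∈ I, ∑ _j ∈ Finset.range (m v), (tvx t + tvy t) :=
            Finset.sum_le_sum fun v _ => Finset.sum_le_sum fun j _ => hthr v (b v j) t
        _ = ∑ v ∈ I, (m v : ℝ≥0∞) * (tvx t + tvy t) := by
            refine Finset.sum_congr rfl fun v _ => ?_
            rw [Finset.sum_const, Finset.card_range, nsmul_eq_mul]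
        _ = (M : ℝ≥0∞) * (tvx t + tvy t) := by
            rw [hM, ← Finset.sum_mul]
            push_cast
            rfl
  -- limit
  have hlim : Tendsto (fun t => ((κ / 2 / 2 + tvx t) + (κ / 2 / 2 + tvy t)) +
      (M : ℝ≥0∞) * (tvx t + tvy t)) atTop (𝓝 (κ / 2)) := by
    have h1 : Tendsto tvx atTop (𝓝 0) := hmix x
    have h2 : Tendsto tvy atTop (𝓝 0) := hmix y
    have h3 : Tendsto (fun t => ((κ / 2 / 2 + tvx t) + (κ / 2 / 2 + tvy t)) +
        (M : ℝ≥0∞) * (tvx t + tvy t)) atTop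
        (𝓝 (((κ / 2 / 2 + 0) + (κ / 2 / 2 + 0)) + (M : ℝ≥0∞) * (0 + 0))) := by
      refine Tendsto.add (Tendsto.add ?_ ?_) ?_
      · exact tendsto_const_nhds.add h1
      · exact tendsto_const_nhds.add h2
      · exact ENNReal.Tendsto.const_mul (h1.add h2) (Or.inr (ENNReal.natCast_ne_top M))
    have h4 : ((κ / 2 / 2 + 0) + (κ / 2 / 2 + 0)) + (M : ℝ≥0∞) * (0 + 0) = κ / 2 := by
      simp [ENNReal.add_halves]
    rwa [h4] at h3
  have hhalf : κ / 2 < κ := ENNReal.half_lt_self hκ0.ne' hκtop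
  refine (hlim.eventually_lt_const hhalf).mono fun t ht => ?_
  exact (hbd t).trans ht.le

end Sync

/-- **Weak point attractors are weak interval attractors for order-preserving strongly
mixing RDS.** Let `(Ω,F,P,θ)` be an ergodic metric dynamical system, `H` a real separable
Banach space with a normal cone `H₊` and a positive-part map, and let `φ` be an
order-preserving RDS on `H` which is strongly mixing with some ergodic measure `μ`. Then
every weak point random attractor for `φ` is a weak interval random attractor for `φ`. -/
theorem weak_point_attractor_is_weak_interval_attractor
    {Ω H : Type*} [MeasurableSpace Ω]
    [NormedAddCommGroup H] [NormedSpace ℝ H] [CompleteSpace H]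
    [TopologicalSpace.SeparableSpace H] [MeasurableSpace H] [BorelSpace H]
    (P : Measure Ω) [IsProbabilityMeasure P]
    (θ : ℝ → Ω → Ω) (hθ : IsErgodicMDS P θ)
    (Hp : Set H) (hcone : IsCone Hp) (hnormal : IsNormalCone Hp)
    (pos : H → H) (hpos : IsPositivePartMap Hp pos)
    (φ : ℝ≥0 → Ω → H → H) (hφ : IsRDS θ φ)
    (horder : IsOrderPreservingRDS Hp φ)
    (μ : Measure H) [IsProbabilityMeasure μ]
    (hmix : IsStronglyMixing P φ μ) :
    ∀ A : Ω → Set H,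
      IsWeakRandomAttractor P θ φ (pointClass H) A →
      IsWeakRandomAttractor P θ φ (intervalClass Hp) A := by

  intro A hA
  obtain ⟨hrcs, hne, hattr, hinv⟩ := hA
  refine ⟨hrcs, hne, ?_, hinv⟩
  intro B hB ε hε
  obtain ⟨x, y, hxy, rfl⟩ := hB
  obtain ⟨c, hc, hcnorm⟩ := hnormal
  have hmeas : ∀ (t : ℝ≥0) (z : H), Measurable (fun ω => φ t ω z) := by
    intro t z
    exact hφ.1.comp (measurable_const.prodMk (measurable_id.prodMk measurable_const))
  -- choose the real radius r
  obtain ⟨r, hr0, hrprop⟩ : ∃ r : ℝ, 0 < r ∧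
      ∀ v : H, ε / 2 ≤ ENNReal.ofReal (c * ‖v‖) → r ≤ ‖v‖ := by
    rcases eq_or_ne ε ⊤ with rfl | hεtop
    · refine ⟨1, one_pos, fun v hv => ?_⟩
      exfalso
      rw [ENNReal.top_div_of_ne_top ENNReal.ofNat_ne_top] at hv
      exact ENNReal.ofReal_ne_top (top_le_iff.mp hv)
    · have hε2top : ε / 2 ≠ ⊤ := by
        intro h
        rw [ENNReal.div_eq_top] at h
        rcases h with ⟨_, h2⟩ | ⟨h1, _⟩
        · exact two_ne_zero h2
        · exact hεtop h1
      have hε20 : ε / 2 ≠ 0 := by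
        simp [ENNReal.div_eq_zero_iff, hε.ne', ENNReal.ofNat_ne_top]
      refine ⟨(ε / 2).toReal / c, div_pos (ENNReal.toReal_pos hε20 hε2top) hc, fun v hv => ?_⟩
      have h1 : (ε / 2).toReal ≤ c * ‖v‖ :=
        ENNReal.toReal_le_of_le_ofReal (by positivity) hv
      rw [div_le_iff₀ hc] at *
      · linarith [h1]
  have hzero : (0 : H) ∈ Hp := zero_mem_cone hcone
  have hxmem : x ∈ coneInterval Hp x y := ⟨by simp [coneLE, hzero], hxy⟩
  -- pointwise bound and inclusion
  have hincl : ∀ t : ℝ≥0,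
      {ω | ε ≤ hausSemidist (φ t ω '' coneInterval Hp x y) (A ω)} ⊆
      {ω | ε / 2 ≤ hausSemidist (φ t ω '' ({x} : Set H)) (A ω)} ∪
      {ω | r ≤ ‖φ t ω y - φ t ω x‖} := by
    intro t ω hω
    have hω' : ε ≤ hausSemidist (φ t ω '' coneInterval Hp x y) (A ω) := hω
    have hne' : (φ t ω '' coneInterval Hp x y).Nonempty := ⟨_, ⟨x, hxmem, rfl⟩⟩
    have hb : hausSemidist (φ t ω '' coneInterval Hp x y) (A ω) ≤
        EMetric.infEdist (φ t ω x) (A ω) + ENNReal.ofReal (c * ‖φ t ω y - φ t ω x‖) := by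
      rw [hausSemidist, if_pos hne']
      refine iSup₂_le ?_
      rintro a ⟨z, hz, rfl⟩
      have h1 : EMetric.infEdist (φ t ω z) (A ω) ≤
          EMetric.infEdist (φ t ω x) (A ω) + edist (φ t ω z) (φ t ω x) :=
        EMetric.infEdist_le_infEdist_add_edist
      have hnorm : ‖φ t ω z - φ t ω x‖ ≤ c * ‖φ t ω y - φ t ω x‖ := by
        refine hcnorm _ _ (horder t ω x z hz.1) ?_
        have h2 : φ t ω y - φ t ω z ∈ Hp := horder t ω z y hz.2
        have h3 : (φ t ω y - φ t ω x) - (φ t ω z - φ t ω x) = φ t ω y - φ t ω z := by abel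
        rwa [h3]
      have h2 : edist (φ t ω z) (φ t ω x) ≤ ENNReal.ofReal (c * ‖φ t ω y - φ t ω x‖) := by
        rw [edist_dist, dist_eq_norm]
        exact ENNReal.ofReal_le_ofReal hnorm
      exact h1.trans (add_le_add le_rfl h2)
    have hsplit : ε / 2 ≤ EMetric.infEdist (φ t ω x) (A ω) ∨
        ε / 2 ≤ ENNReal.ofReal (c * ‖φ t ω y - φ t ω x‖) := by
      by_contra hcon
      push_neg at hcon
      have hlt := ENNReal.add_lt_add hcon.1 hcon.2
      rw [ENNReal.add_halves] at hlt
      exact absurd (hω'.trans hb) (not_le.mpr hlt)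
    rcases hsplit with h | h
    · left
      have heq : hausSemidist (φ t ω '' ({x} : Set H)) (A ω) =
          EMetric.infEdist (φ t ω x) (A ω) := by
        rw [Set.image_singleton, hausSemidist, if_pos (Set.singleton_nonempty _)]
        simp
      exact Set.mem_setOf_eq ▸ (heq ▸ h)
    · right
      exact hrprop _ h
  -- conclude
  have hε2 : (0:ℝ≥0∞) < ε / 2 := ENNReal.div_pos hε.ne' ENNReal.ofNat_ne_top
  have hP1 := hattr {x} ⟨x, rfl⟩ (ε / 2) hε2
  have hP2 := sync_lemma P hcone hmeas horder μ hmix hxy hr0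
  rw [ENNReal.tendsto_nhds_zero]
  intro κ hκ
  have hκ2 : (0:ℝ≥0∞) < κ / 2 := ENNReal.div_pos hκ.ne' ENNReal.ofNat_ne_top
  have e1 := (ENNReal.tendsto_nhds_zero.mp hP1) (κ / 2) hκ2
  have e2 := (ENNReal.tendsto_nhds_zero.mp hP2) (κ / 2) hκ2
  filter_upwards [e1, e2] with t h1 h2
  calc P {ω | ε ≤ hausSemidist (φ t ω '' coneInterval Hp x y) (A ω)}
      ≤ P ({ω | ε / 2 ≤ hausSemidist (φ t ω '' ({x} : Set H)) (A ω)} ∪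
          {ω | r ≤ ‖φ t ω y - φ t ω x‖}) := measure_mono (hincl t)
    _ ≤ P {ω | ε / 2 ≤ hausSemidist (φ t ω '' ({x} : Set H)) (A ω)} +
        P {ω | r ≤ ‖φ t ω y - φ t ω x‖} := measure_union_le _ _
    _ ≤ κ / 2 + κ / 2 := add_le_add h1 h2
    _ = κ := ENNReal.add_halves κ
end
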